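/- Let V be a finite-dimensional complex vector space and let ρ be a representation of the infinite dihedral group D_∞ (in Mathlib, DihedralGroup 0, generated by the reflections sr 0 and sr 1, which satisfy (sr 0)·(sr 1) = r 1) on V. Assume ρ preserves a nondegenerate symmetric bilinear form Φ on V (i.e. Φ(ρ(g)x, ρ(g)y) = Φ(x, y) for all g ∈ D_∞). Then 2 · dim H¹(D_∞, ρ) = dim V + dim ker(ρ(r 1) − id) − dim ker(ρ(sr 0) − id) − dim ker(ρ(sr 1) − id), where H¹ denotes first group cohomology with coefficients in ρ. -/

import Mathlib

open DihedralGroup groupCohomology Module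

namespace Stmt4Aux

variable {V : Type} [AddCommGroup V] [Module ℂ V]
variable (ρ : Representation ℂ (DihedralGroup 0) V)

lemma S0S0 (x : V) : ρ (sr 0) (ρ (sr 0) x) = x := by
  rw [← Module.End.mul_apply, ← map_mul, sr_mul_sr, sub_self, ← one_def, map_one,
    Module.End.one_apply]

lemma S1S1 (x : V) : ρ (sr 1) (ρ (sr 1) x) = x := by
  rw [← Module.End.mul_apply, ← map_mul, sr_mul_sr, sub_self, ← one_def, map_one,
    Module.End.one_apply]

lemma RR (m n : ℤ) (x : V) :
    ρ (r (m : ZMod 0)) (ρ (r (n : ZMod 0)) x) = ρ (r ((m + n : ℤ) : ZMod 0)) x := by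
  erw [← Module.End.mul_apply, ← map_mul, r_mul_r]; rfl

lemma S0R (n : ℤ) (x : V) :
    ρ (sr 0) (ρ (r (n : ZMod 0)) x) = ρ (r ((-n : ℤ) : ZMod 0)) (ρ (sr 0) x) := by
  erw [← Module.End.mul_apply, ← map_mul, sr_mul_r, zero_add,
    ← Module.End.mul_apply, ← map_mul, r_mul_sr]
  erw [zero_sub, neg_neg]

lemma S0S1 (x : V) : ρ (sr 0) (ρ (sr 1) x) = ρ (r 1) x := by
  rw [← Module.End.mul_apply, ← map_mul, sr_mul_sr]
  norm_num

lemma S1_eq (x : V) : ρ (sr 1) x = ρ (sr 0) (ρ (r 1) x) := by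
  rw [← Module.End.mul_apply, ← map_mul, sr_mul_r, zero_add]

lemma srn_eq (n : ℤ) (x : V) :
    ρ (sr (n : ZMod 0)) x = ρ (sr 0) (ρ (r (n : ZMod 0)) x) := by
  erw [← Module.End.mul_apply, ← map_mul, sr_mul_r, zero_add]

/-- The invariants of `ρ` are cut out by the two reflections. -/
lemma invariants_eq :
    Representation.invariants ρ
      = LinearMap.ker (ρ (sr (0 : ZMod 0)) - LinearMap.id)
        ⊓ LinearMap.ker (ρ (sr (1 : ZMod 0)) - LinearMap.id) := by
  ext v
  simp only [Representation.mem_invariants, Submodule.mem_inf, LinearMap.mem_ker,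
    LinearMap.sub_apply, LinearMap.id_apply, sub_eq_zero]
  constructor
  · exact fun h => ⟨h _, h _⟩
  · rintro ⟨h0, h1⟩ g
    have hr1 : ρ (r (1 : ZMod 0)) v = v := by
      rw [← S0S1 ρ v, h1, h0]
    have hrm1 : ρ (r ((-1 : ℤ) : ZMod 0)) v = v := by
      conv_lhs => erw [← hr1, RR]
      norm_num
      erw [← one_def, map_one, Module.End.one_apply]
    have hr : ∀ n : ℤ, ρ (r (n : ZMod 0)) v = v := by
      intro n
      induction n using Int.induction_on with
      | zero => erw [← one_def, map_one, Module.End.one_apply]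
      | succ n ih => erw [← RR ρ n 1, hr1, ih]
      | pred n ih => rw [show (-(n:ℤ) - 1) = (-n) + (-1) by ring, ← RR ρ (-n) (-1), hrm1, ih]
    cases g with
    | r n => exact hr n
    | sr n => erw [srn_eq, hr n, h0]


/-! ### The ℤ-indexed partial sums used to build cocycles -/

noncomputable def fN (c : V) : ℕ → V := fun n => ∑ i ∈ Finset.range n, ρ (r ((i : ℤ) : ZMod 0)) c

noncomputable def fZ (c : V) (n : ℤ) : V :=
  fN ρ c n.toNat - ρ (r (n : ZMod 0)) (fN ρ c (-n).toNat)

lemma fN_zero (c : V) : fN ρ c 0 = 0 := by simp [fN]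

lemma fN_succ (c : V) (n : ℕ) :
    fN ρ c (n + 1) = fN ρ c n + ρ (r ((n : ℤ) : ZMod 0)) c := by
  simp [fN, Finset.sum_range_succ]

lemma fN_succ' (c : V) (n : ℕ) :
    fN ρ c (n + 1) = c + ρ (r (1 : ZMod 0)) (fN ρ c n) := by
  rw [fN, fN, Finset.sum_range_succ', map_sum, add_comm]
  congr 1
  · norm_num
    erw [← one_def, map_one, Module.End.one_apply]
  · apply Finset.sum_congr rfl
    intro i _
    have h := RR ρ 1 (i : ℤ) c
    rw [show (1 + (i:ℤ)) = (((i+1 : ℕ)) : ℤ) by push_cast; ring] at h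
    exact h.symm

lemma fZ_zero (c : V) : fZ ρ c 0 = 0 := by
  simp [fZ, fN_zero]

lemma fZ_step (c : V) (n : ℤ) : fZ ρ c (n + 1) = fZ ρ c n + ρ (r (n : ZMod 0)) c := by
  rcases le_or_gt 0 n with h | h
  · have h1 : (-(n+1)).toNat = 0 := by omega
    have h2 : (-n).toNat = 0 := by omega
    have h3 : (n+1).toNat = n.toNat + 1 := by omega
    rw [fZ, fZ, h1, h2, h3, fN_zero, map_zero, map_zero, sub_zero, sub_zero, fN_succ,
      Int.toNat_of_nonneg h]
  · have h1 : n.toNat = 0 := by omega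
    have h2 : (n+1).toNat = 0 := by omega
    have h3 : (-n).toNat = (-(n+1)).toNat + 1 := by omega
    erw [fZ, fZ, h1, h2, h3, fN_zero, zero_sub, zero_sub, fN_succ', map_add, RR ρ n 1]
    abel

lemma fZ_add (c : V) (m n : ℤ) :
    fZ ρ c (m + n) = fZ ρ c m + ρ (r (m : ZMod 0)) (fZ ρ c n) := by
  induction n using Int.induction_on with
  | zero => rw [add_zero, fZ_zero, map_zero, add_zero]
  | succ n ih =>
      rw [show m + ((n : ℤ) + 1) = (m + n) + 1 by ring, fZ_step, ih, fZ_step, map_add, RR]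
      abel
  | pred n ih =>
      have h1 := fZ_step ρ c (m + (-(n : ℤ) - 1))
      have h2 := fZ_step ρ c (-(n : ℤ) - 1)
      rw [show m + (-(n:ℤ) - 1) + 1 = m + (-(n:ℤ)) by ring] at h1
      rw [show (-(n:ℤ) - 1) + 1 = -(n:ℤ) by ring] at h2
      rw [ih, h2, map_add, RR, ← add_assoc] at h1
      exact (add_right_cancel h1).symm


section Construction

variable (a b : V)

lemma hS0c (ha : ρ (sr 0) a = -a) :
    ρ (sr 0) (a + ρ (sr 0) b) = b - a := by
  rw [map_add, ha, S0S0]; abel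

lemma hS0b (hb : ρ (sr 1) b = -b) : ρ (sr 0) b = - ρ (r (1 : ZMod 0)) b := by
  have h := S0S1 ρ b
  rw [hb, map_neg] at h
  rw [← h, neg_neg]

lemma S0_fZ (ha : ρ (sr 0) a = -a) (hb : ρ (sr 1) b = -b) (n : ℤ) :
    ρ (sr 0) (fZ ρ (a + ρ (sr 0) b) n)
      = fZ ρ (a + ρ (sr 0) b) (-n) + ρ (r ((-n : ℤ) : ZMod 0)) a - a := by
  set c := a + ρ (sr 0) b with hc
  induction n using Int.induction_on with
  | zero =>
      erw [neg_zero, fZ_zero, map_zero, zero_add, ← one_def, map_one, Module.End.one_apply]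
      abel
  | succ n ih =>
      rw [show -((n:ℤ)+1) = -(n:ℤ)-1 by ring]
      have h2 := fZ_step ρ c (-(n:ℤ)-1)
      rw [show (-(n:ℤ) - 1) + 1 = -(n:ℤ) by ring] at h2
      have key : ρ (r ((-(n:ℤ)-1 : ℤ) : ZMod 0)) (ρ (sr 0) b)
          = - ρ (r ((-(n:ℤ) : ℤ) : ZMod 0)) b := by
        erw [hS0b ρ b hb, map_neg, RR, show (-(n:ℤ)-1+1 : ℤ) = -(n:ℤ) by ring]
      rw [fZ_step, map_add, ih, S0R, hS0c ρ a b ha, h2, hc, map_add, map_sub, key]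
      abel
  | pred n ih =>
      rw [show (-(n:ℤ)-1 : ℤ) = -((n:ℤ)+1) by ring, neg_neg]
      have h2 := fZ_step ρ c (-(n:ℤ)-1)
      rw [show (-(n:ℤ) - 1) + 1 = -(n:ℤ) by ring] at h2
      have hfz : fZ ρ c (-(n:ℤ)-1) = fZ ρ c (-(n:ℤ)) - ρ (r ((-(n:ℤ)-1 : ℤ) : ZMod 0)) c :=
        by rw [h2]; abel
      have key : ρ (r ((n:ℤ) : ZMod 0)) (ρ (sr 0) b)
          = - ρ (r (((n:ℤ)+1 : ℤ) : ZMod 0)) b := by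
        erw [hS0b ρ b hb, map_neg, RR]; rfl
      rw [show -((n:ℤ)+1) = -(n:ℤ)-1 by ring, hfz, map_sub, ih, S0R, neg_neg,
        show (-(-(n:ℤ)-1) : ℤ) = (n:ℤ)+1 by ring, hS0c ρ a b ha, fZ_step, hc, map_sub, map_add,
        key]
      abel

/-- The 1-cocycle on `D_∞` with values `a` and `b` on the two reflections. -/
noncomputable def cocycleFun (c a : V) : DihedralGroup 0 → V
  | .r n => fZ ρ c n
  | .sr n => a + ρ (sr 0) (fZ ρ c n)

@[simp] lemma cocycleFun_r (c a : V) (n : ZMod 0) :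
    cocycleFun ρ c a (r n) = fZ ρ c n := rfl

@[simp] lemma cocycleFun_sr (c a : V) (n : ZMod 0) :
    cocycleFun ρ c a (sr n) = a + ρ (sr 0) (fZ ρ c n) := rfl

lemma cocycleFun_spec (ha : ρ (sr 0) a = -a) (hb : ρ (sr 1) b = -b)
    (g h : DihedralGroup 0) :
    cocycleFun ρ (a + ρ (sr 0) b) a (g * h)
      = ρ g (cocycleFun ρ (a + ρ (sr 0) b) a h) + cocycleFun ρ (a + ρ (sr 0) b) a g := by
  set c := a + ρ (sr 0) b with hc
  cases g with
  | r m =>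
    cases h with
    | r n =>
        erw [r_mul_r, cocycleFun_r, cocycleFun_r, cocycleFun_r,
          show ((m:ZMod 0) + n) = ((m:ℤ) + (n:ℤ) : ℤ) from rfl, fZ_add]
        abel
    | sr n =>
        erw [r_mul_sr, cocycleFun_sr, cocycleFun_sr, cocycleFun_r,
          show ((n:ZMod 0) - m) = ((n:ℤ) - (m:ℤ) : ℤ) from rfl,
          S0_fZ ρ a b ha hb ((n:ℤ)-(m:ℤ)),
          show (-((n:ℤ)-(m:ℤ)) : ℤ) = (m:ℤ)-(n:ℤ) by ring]
        have hadd : fZ ρ c ((m:ℤ)-(n:ℤ)) = fZ ρ c m + ρ (r (m : ZMod 0)) (fZ ρ c (-(n:ℤ))) := by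
          have h0 := fZ_add ρ c (m:ℤ) (-(n:ℤ))
          erw [show (m:ℤ) + -(n:ℤ) = (m:ℤ)-(n:ℤ) by ring] at h0
          exact h0
        rw [hadd, map_add, S0_fZ ρ a b ha hb n, map_sub, map_add]; erw [RR,
          show (m:ℤ) + -(n:ℤ) = (m:ℤ)-(n:ℤ) by ring, ← hc]
        show a + (fZ ρ c (m:ℤ) + ρ (r (m:ℤ)) (fZ ρ c (-(n:ℤ))) + ρ (r ((m:ℤ)-(n:ℤ))) a - a)
          = ρ (r (m:ℤ)) a + (ρ (r (m:ℤ)) (fZ ρ c (-(n:ℤ))) + ρ (r ((m:ℤ)-(n:ℤ))) a - ρ (r (m:ℤ)) a)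
            + fZ ρ c (m:ℤ)
        abel
  | sr m =>
    cases h with
    | r n =>
        erw [sr_mul_r, cocycleFun_sr, cocycleFun_r, cocycleFun_sr,
          show ((m:ZMod 0) + n) = ((m:ℤ) + (n:ℤ) : ℤ) from rfl,
          fZ_add, map_add, srn_eq ρ m (fZ ρ c n)]
        abel
    | sr n =>
        have e2 : ∀ x : V, ρ (sr (m : ZMod 0)) (ρ (sr 0) x)
            = ρ (r ((-(m:ℤ) : ℤ) : ZMod 0)) x := fun x => by
          erw [srn_eq, S0R, S0S0]; rfl
        have e1 : ρ (sr (m : ZMod 0)) a = - ρ (r ((-(m:ℤ) : ℤ) : ZMod 0)) a := by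
          erw [srn_eq, S0R, ha, map_neg]; rfl
        rw [sr_mul_sr, cocycleFun_r, cocycleFun_sr, cocycleFun_sr,
          show ((n:ZMod 0) - m) = ((n:ℤ) - (m:ℤ) : ℤ) from rfl]
        have hadd : fZ ρ c ((n:ℤ)-(m:ℤ))
            = fZ ρ c (-(m:ℤ)) + ρ (r ((-(m:ℤ) : ℤ) : ZMod 0)) (fZ ρ c n) := by
          have h0 := fZ_add ρ c (-(m:ℤ)) (n:ℤ)
          erw [show (-(m:ℤ)) + (n:ℤ) = (n:ℤ)-(m:ℤ) by ring] at h0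
          exact h0
        rw [hadd, map_add, e1, e2, S0_fZ ρ a b ha hb m, ← hc]
        show fZ ρ c (-(m:ℤ)) + ρ (r (-(m:ℤ))) (fZ ρ c n) = -ρ (r (-(m:ℤ))) a + ρ (r (-(m:ℤ))) (fZ ρ c n)
          + (a + (fZ ρ c (-(m:ℤ)) + ρ (r (-(m:ℤ))) a - a))
        abel

end Construction


/-! ### Linear algebra lemmas -/

section LinAlg

lemma mem_ker_sub_iff (S : V →ₗ[ℂ] V) (v : V) :
    v ∈ LinearMap.ker (S - LinearMap.id) ↔ S v = v := by
  simp [LinearMap.mem_ker, LinearMap.sub_apply, sub_eq_zero]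

lemma mem_ker_add_iff (S : V →ₗ[ℂ] V) (v : V) :
    v ∈ LinearMap.ker (S + LinearMap.id) ↔ S v = -v := by
  simp [LinearMap.mem_ker, LinearMap.add_apply, add_eq_zero_iff_eq_neg]

lemma eq_zero_of_eq_neg (v : V) (h : v = -v) : v = 0 := by
  have h2 : (2 : ℂ) • v = 0 := by
    rw [two_smul]
    nth_rewrite 1 [h]
    abel
  rcases smul_eq_zero.1 h2 with h' | h'
  · exact absurd h' two_ne_zero
  · exact h'

lemma invol_inf_eq_bot (S : V →ₗ[ℂ] V) :
    LinearMap.ker (S - LinearMap.id) ⊓ LinearMap.ker (S + LinearMap.id) = ⊥ := by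
  rw [eq_bot_iff]
  intro v hv
  obtain ⟨h1, h2⟩ := Submodule.mem_inf.1 hv
  rw [mem_ker_sub_iff] at h1
  rw [mem_ker_add_iff] at h2
  rw [Submodule.mem_bot]
  exact eq_zero_of_eq_neg v (h1.symm.trans h2)

lemma invol_sup_eq_top (S : V →ₗ[ℂ] V) (hS : ∀ x, S (S x) = x) :
    LinearMap.ker (S - LinearMap.id) ⊔ LinearMap.ker (S + LinearMap.id) = ⊤ := by
  rw [eq_top_iff]
  intro v _
  rw [Submodule.mem_sup]
  refine ⟨(2⁻¹ : ℂ) • (v + S v), ?_, (2⁻¹ : ℂ) • (v - S v), ?_, ?_⟩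
  · exact Submodule.smul_mem _ _ ((mem_ker_sub_iff S _).2 (by rw [map_add, hS]; abel))
  · exact Submodule.smul_mem _ _ ((mem_ker_add_iff S _).2 (by rw [map_sub, hS]; abel))
  · module

lemma finrank_invol [FiniteDimensional ℂ V] (S : V →ₗ[ℂ] V) (hS : ∀ x, S (S x) = x) :
    Module.finrank ℂ (LinearMap.ker (S - LinearMap.id))
      + Module.finrank ℂ (LinearMap.ker (S + LinearMap.id)) = Module.finrank ℂ V := by
  have h := Submodule.finrank_sup_add_finrank_inf_eq
    (LinearMap.ker (S - LinearMap.id)) (LinearMap.ker (S + LinearMap.id))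
  rw [invol_sup_eq_top S hS, invol_inf_eq_bot S, finrank_top, finrank_bot, add_zero] at h
  exact h.symm



variable (Φ : V →ₗ[ℂ] V →ₗ[ℂ] ℂ)

lemma orth_ker (S : V →ₗ[ℂ] V) (hS : ∀ x, S (S x) = x)
    (hsymm : ∀ x y : V, Φ x y = Φ y x)
    (hnd : ∀ v : V, (∀ w : V, Φ v w = 0) → v = 0)
    (hinv : ∀ x y : V, Φ (S x) (S y) = Φ x y) :
    LinearMap.BilinForm.orthogonal Φ (LinearMap.ker (S + LinearMap.id))
      = LinearMap.ker (S - LinearMap.id) := by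
  ext v
  rw [LinearMap.BilinForm.mem_orthogonal_iff, mem_ker_sub_iff]
  constructor
  · intro hv
    have hu : ∀ w : V, Φ (v - S v) w = 0 := by
      intro w
      have hwmem : (w - S w) ∈ LinearMap.ker (S + LinearMap.id) :=
        (mem_ker_add_iff S _).2 (by rw [map_sub, hS]; abel)
      have hA : Φ (v - S v) (w + S w) = 0 := by
        have h1 : S (v - S v) = -(v - S v) := by rw [map_sub, hS]; abel
        have h2 : S (w + S w) = w + S w := by rw [map_add, hS]; abel
        have h3 := hinv (v - S v) (w + S w)
        rw [h1, h2, map_neg, LinearMap.neg_apply] at h3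
        linear_combination -h3 / 2
      have hvw : Φ v (w - S w) = 0 := by
        rw [hsymm]
        exact hv _ hwmem
      have hSvw : Φ (S v) (w - S w) = 0 := by
        have h3 := hinv v (w - S w)
        have h4 : S (w - S w) = -(w - S w) := by rw [map_sub, hS]; abel
        rw [h4, map_neg] at h3
        linear_combination -h3 - hvw
      have hB : Φ (v - S v) (w - S w) = 0 := by
        have hexp : Φ (v - S v) = Φ v - Φ (S v) := map_sub Φ _ _
        rw [hexp, LinearMap.sub_apply, hvw, hSvw, sub_zero]
      have hw : w = (2⁻¹ : ℂ) • (w + S w) + (2⁻¹ : ℂ) • (w - S w) := by module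
      rw [hw, map_add, map_smul, map_smul, hA, hB]
      simp
    have h0 := hnd _ hu
    rw [sub_eq_zero] at h0
    exact h0.symm
  · intro hv n hn
    rw [mem_ker_add_iff] at hn
    have h3 := hinv n v
    rw [hn, hv, map_neg, LinearMap.neg_apply] at h3
    linear_combination -h3 / 2

lemma orth_sup (N1 N2 : Submodule ℂ V) :
    LinearMap.BilinForm.orthogonal Φ (N1 ⊔ N2)
      = LinearMap.BilinForm.orthogonal Φ N1 ⊓ LinearMap.BilinForm.orthogonal Φ N2 := by
  ext v
  simp only [LinearMap.BilinForm.mem_orthogonal_iff, Submodule.mem_inf]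
  constructor
  · intro h
    exact ⟨fun n hn => h n (Submodule.mem_sup_left hn),
      fun n hn => h n (Submodule.mem_sup_right hn)⟩
  · rintro ⟨h1, h2⟩ n hn
    obtain ⟨y, hy, z, hz, rfl⟩ := Submodule.mem_sup.1 hn
    have hy' := h1 y hy
    have hz' := h2 z hz
    rw [map_add, LinearMap.add_apply, hy', hz', add_zero]



/-! ### Decomposition of the fixed space of `r 1` -/

lemma r1_inf_bot :
    ((LinearMap.ker (ρ (sr (0:ZMod 0)) - LinearMap.id)
        ⊓ LinearMap.ker (ρ (sr (1:ZMod 0)) - LinearMap.id))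
      ⊓ (LinearMap.ker (ρ (sr (0:ZMod 0)) + LinearMap.id)
        ⊓ LinearMap.ker (ρ (sr (1:ZMod 0)) + LinearMap.id))) = ⊥ := by
  rw [eq_bot_iff]
  intro v hv
  obtain ⟨h1, -⟩ := Submodule.mem_inf.1 (Submodule.mem_inf.1 hv).1
  obtain ⟨h2, -⟩ := Submodule.mem_inf.1 (Submodule.mem_inf.1 hv).2
  rw [mem_ker_sub_iff] at h1
  rw [mem_ker_add_iff] at h2
  rw [Submodule.mem_bot]
  exact eq_zero_of_eq_neg v (h1.symm.trans h2)

lemma r1_sup_eq :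
    ((LinearMap.ker (ρ (sr (0:ZMod 0)) - LinearMap.id)
        ⊓ LinearMap.ker (ρ (sr (1:ZMod 0)) - LinearMap.id))
      ⊔ (LinearMap.ker (ρ (sr (0:ZMod 0)) + LinearMap.id)
        ⊓ LinearMap.ker (ρ (sr (1:ZMod 0)) + LinearMap.id)))
      = LinearMap.ker (ρ (r (1:ZMod 0)) - LinearMap.id) := by
  apply le_antisymm
  · apply sup_le
    · intro v hv
      obtain ⟨h0, h1⟩ := Submodule.mem_inf.1 hv
      rw [mem_ker_sub_iff] at h0 h1 ⊢
      rw [← S0S1, h1, h0]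
    · intro v hv
      obtain ⟨h0, h1⟩ := Submodule.mem_inf.1 hv
      rw [mem_ker_add_iff] at h0 h1
      rw [mem_ker_sub_iff, ← S0S1, h1, map_neg, h0, neg_neg]
  · intro v hv
    rw [mem_ker_sub_iff] at hv
    have hw0 : ρ (sr 0) (ρ (sr 1) v) = v := by rw [S0S1]; exact hv
    have hw1 : ρ (sr 0) v = ρ (sr 1) v := by
      have h := congrArg (ρ (sr 0)) hw0
      rw [S0S0] at h
      rw [← h]
    rw [Submodule.mem_sup]
    refine ⟨(2⁻¹ : ℂ) • (v + ρ (sr 1) v), Submodule.smul_mem _ _ (Submodule.mem_inf.2 ⟨?_, ?_⟩),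
      (2⁻¹ : ℂ) • (v - ρ (sr 1) v), Submodule.smul_mem _ _ (Submodule.mem_inf.2 ⟨?_, ?_⟩),
      by module⟩
    · rw [mem_ker_sub_iff, map_add, hw0, hw1]; abel
    · rw [mem_ker_sub_iff, map_add, S1S1]; abel
    · rw [mem_ker_add_iff, map_sub, hw0, hw1]; abel
    · rw [mem_ker_add_iff, map_sub, S1S1]; abel

lemma finrank_ker_r1 [FiniteDimensional ℂ V] :
    Module.finrank ℂ (LinearMap.ker (ρ (r (1:ZMod 0)) - LinearMap.id))
      = Module.finrank ℂ (LinearMap.ker (ρ (sr (0:ZMod 0)) - LinearMap.id)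
          ⊓ LinearMap.ker (ρ (sr (1:ZMod 0)) - LinearMap.id) : Submodule ℂ V)
        + Module.finrank ℂ (LinearMap.ker (ρ (sr (0:ZMod 0)) + LinearMap.id)
          ⊓ LinearMap.ker (ρ (sr (1:ZMod 0)) + LinearMap.id) : Submodule ℂ V) := by
  have h := Submodule.finrank_sup_add_finrank_inf_eq
    (LinearMap.ker (ρ (sr (0:ZMod 0)) - LinearMap.id)
      ⊓ LinearMap.ker (ρ (sr (1:ZMod 0)) - LinearMap.id))
    (LinearMap.ker (ρ (sr (0:ZMod 0)) + LinearMap.id)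
      ⊓ LinearMap.ker (ρ (sr (1:ZMod 0)) + LinearMap.id))
  rw [r1_sup_eq, r1_inf_bot, finrank_bot, add_zero] at h
  exact h

end LinAlg

/-! ### Cocycles of `D_∞` -/

section Cocycles

lemma fZ_one (c : V) : fZ ρ c 1 = c := by
  have h := fZ_step ρ c 0
  erw [zero_add, fZ_zero, zero_add, ← one_def, map_one, Module.End.one_apply] at h
  exact h

/-- Evaluation of a cocycle at the two reflections. -/
noncomputable def evalCocycle :
    cocycles₁ (Rep.of ρ) →ₗ[ℂ]
      (LinearMap.ker (ρ (sr (0:ZMod 0)) + LinearMap.id))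
        × (LinearMap.ker (ρ (sr (1:ZMod 0)) + LinearMap.id)) where
  toFun f :=
    (⟨f (sr 0), by
      have h := (mem_cocycles₁_iff (f : DihedralGroup 0 → V)).1 f.2 (sr 0) (sr 0)
      rw [sr_mul_self, cocycles₁_map_one, Rep.of_ρ] at h
      rw [mem_ker_add_iff]
      exact eq_neg_of_add_eq_zero_left h.symm⟩,
     ⟨f (sr 1), by
      have h := (mem_cocycles₁_iff (f : DihedralGroup 0 → V)).1 f.2 (sr 1) (sr 1)
      rw [sr_mul_self, cocycles₁_map_one, Rep.of_ρ] at h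
      rw [mem_ker_add_iff]
      exact eq_neg_of_add_eq_zero_left h.symm⟩)
  map_add' f g := by
    ext
    · rfl
    · rfl
  map_smul' r f := by
    ext
    · rfl
    · rfl

lemma cocycle_fun_zero (w : DihedralGroup 0 → V)
    (hu : ∀ g h : DihedralGroup 0, w (g * h) = ρ g (w h) + w g)
    (hone : w 1 = 0) (h0 : w (sr 0) = 0) (h1 : w (sr 1) = 0) : ∀ x, w x = 0 := by
  have hr1 : w (r 1) = 0 := by
    have h := hu (sr 0) (sr 1)
    rw [sr_mul_sr, h1, h0, map_zero, add_zero, show ((1:ZMod 0) - 0) = 1 from by norm_num] at h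
    exact h
  have hrm1 : w (r ((-1 : ℤ) : ZMod 0)) = 0 := by
    have h := hu (r 1) (r ((-1:ℤ) : ZMod 0))
    erw [r_mul_r] at h
    have e : (r (@HAdd.hAdd (ZMod 0) (ZMod 0) (ZMod 0) _ (1 : ZMod 0) ((-1:ℤ) : ZMod 0))
        : DihedralGroup 0) = 1 := rfl
    rw [e, hone, hr1, add_zero] at h
    have hinj : ∀ x : V, ρ (r ((-1:ℤ) : ZMod 0)) (ρ (r 1) x) = x := by
      intro x
      erw [← Module.End.mul_apply, ← map_mul, r_mul_r]
      have e2 : (r (@HAdd.hAdd (ZMod 0) (ZMod 0) (ZMod 0) _ ((-1:ℤ) : ZMod 0) (1 : ZMod 0))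
          : DihedralGroup 0) = 1 := rfl
      erw [e2, map_one, Module.End.one_apply]
    have h2 := congrArg (ρ (r ((-1:ℤ) : ZMod 0))) h
    rw [map_zero, hinj] at h2
    exact h2.symm
  have hr : ∀ n : ℤ, w (r (n : ZMod 0)) = 0 := by
    intro n
    induction n using Int.induction_on with
    | zero => rw [show (r ((0:ℤ):ZMod 0) : DihedralGroup 0) = 1 from rfl, hone]
    | succ n ih =>
        have h := hu (r (n : ZMod 0)) (r 1)
        erw [r_mul_r, hr1, ih, map_zero, add_zero,
          show ((n:ZMod 0) + 1) = (((n:ℤ)+1 : ℤ) : ZMod 0) from rfl] at h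
        exact h
    | pred n ih =>
        have h := hu (r ((-n : ℤ) : ZMod 0)) (r ((-1:ℤ) : ZMod 0))
        erw [r_mul_r, hrm1, ih, map_zero, add_zero] at h
        exact h
  intro x
  cases x with
  | r n => exact hr n
  | sr n =>
      have h := hu (sr 0) (r (n : ZMod 0))
      rw [sr_mul_r, hr n, h0, map_zero, add_zero, zero_add] at h
      exact h

lemma cocycle_zero (u : cocycles₁ (Rep.of ρ)) (h0 : (u (sr 0) : V) = 0)
    (h1 : (u (sr 1) : V) = 0) : ∀ x, (u x : V) = 0 := by
  have hu0 := (mem_cocycles₁_iff (u : DihedralGroup 0 → V)).1 u.2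
  simp only [Rep.of_ρ] at hu0
  exact cocycle_fun_zero ρ (fun g => u g) hu0 (cocycles₁_map_one u) h0 h1

lemma evalCocycle_injective : Function.Injective (evalCocycle ρ) := by
  rw [injective_iff_map_eq_zero]
  intro u hu
  have h0 : u (sr 0) = 0 := congrArg Subtype.val (congrArg Prod.fst hu)
  have h1 : u (sr 1) = 0 := congrArg Subtype.val (congrArg Prod.snd hu)
  exact Subtype.ext (funext (cocycle_zero ρ u h0 h1))

lemma evalCocycle_surjective : Function.Surjective (evalCocycle ρ) := by
  rintro ⟨⟨a, ha⟩, ⟨b, hb⟩⟩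
  rw [mem_ker_add_iff] at ha hb
  have hmem : cocycleFun ρ (a + ρ (sr 0) b) a ∈ cocycles₁ (Rep.of ρ) := by
    rw [mem_cocycles₁_iff]
    intro g h
    exact cocycleFun_spec ρ a b ha hb g h
  refine ⟨⟨cocycleFun ρ (a + ρ (sr 0) b) a, hmem⟩, ?_⟩
  have e0 : cocycleFun ρ (a + ρ (sr 0) b) a (sr 0) = a := by
    rw [cocycleFun_sr, show ((0 : ZMod 0)) = ((0:ℤ) : ZMod 0) from rfl, fZ_zero, map_zero,
      add_zero]
  have e1 : cocycleFun ρ (a + ρ (sr 0) b) a (sr 1) = b := by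
    rw [cocycleFun_sr, show ((1 : ZMod 0)) = ((1:ℤ) : ZMod 0) from rfl, fZ_one,
      hS0c ρ a b ha]
    abel
  ext
  · exact e0
  · exact e1

end Cocycles

/-! ### Dimension counts -/

section Dims

variable [FiniteDimensional ℂ V]

lemma findim_Z : FiniteDimensional ℂ (cocycles₁ (Rep.of ρ)) :=
  FiniteDimensional.of_injective (evalCocycle ρ) (evalCocycle_injective ρ)

lemma finrank_Z :
    Module.finrank ℂ (cocycles₁ (Rep.of ρ))
      = Module.finrank ℂ (LinearMap.ker (ρ (sr (0:ZMod 0)) + LinearMap.id))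
        + Module.finrank ℂ (LinearMap.ker (ρ (sr (1:ZMod 0)) + LinearMap.id)) := by
  haveI := findim_Z ρ
  rw [(LinearEquiv.ofBijective (evalCocycle ρ)
    ⟨evalCocycle_injective ρ, evalCocycle_surjective ρ⟩).finrank_eq, Module.finrank_prod]

lemma finrank_B :
    Module.finrank ℂ (coboundaries₁ (Rep.of ρ))
      + Module.finrank ℂ (Representation.invariants ρ) = Module.finrank ℂ V := by
  haveI : FiniteDimensional ℂ (Rep.of ρ) := ‹FiniteDimensional ℂ V›
  have h := LinearMap.finrank_range_add_finrank_ker (d₀₁ (Rep.of ρ)).hom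
  rw [d₀₁_ker_eq_invariants] at h
  exact h

lemma finrank_H1_add :
    Module.finrank ℂ (H1 (Rep.of ρ)) + Module.finrank ℂ (coboundaries₁ (Rep.of ρ))
      = Module.finrank ℂ (cocycles₁ (Rep.of ρ)) := by
  haveI := findim_Z ρ
  have hs : Function.Surjective (H1π (Rep.of ρ)).hom :=
    (ModuleCat.epi_iff_surjective _).1 inferInstance
  have h := LinearMap.finrank_range_add_finrank_ker (H1π (Rep.of ρ)).hom
  rw [LinearMap.range_eq_top.2 hs, finrank_top] at h
  have hk : LinearMap.ker (H1π (Rep.of ρ)).hom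
      = (coboundaries₁ (Rep.of ρ)).comap (cocycles₁ (Rep.of ρ)).subtype := by
    ext x
    exact H1π_eq_zero_iff x
  rw [hk, (Submodule.comapSubtypeEquivOfLe (coboundaries₁_le_cocycles₁ _)).finrank_eq] at h
  exact h

end Dims

end Stmt4Aux

open Stmt4Aux in
/-- Let `ρ` be a representation of the infinite dihedral group
`D_∞ = DihedralGroup 0` on a finite-dimensional complex vector space `V`, preserving a
nondegenerate symmetric bilinear form `Φ`. Then
`2 * dim H¹(D_∞, ρ) = dim V + dim ker (ρ (r 1) - id) - dim ker (ρ (sr 0) - id)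
  - dim ker (ρ (sr 1) - id)`. -/
theorem stmt_4
    (V : Type) [AddCommGroup V] [Module ℂ V] [FiniteDimensional ℂ V]
    (ρ : Representation ℂ (DihedralGroup 0) V)
    (Φ : V →ₗ[ℂ] V →ₗ[ℂ] ℂ)
    (hΦsymm : ∀ x y : V, Φ x y = Φ y x)
    (hΦnd : ∀ v : V, (∀ w : V, Φ v w = 0) → v = 0)
    (hΦinv : ∀ (g : DihedralGroup 0) (x y : V), Φ (ρ g x) (ρ g y) = Φ x y) :
    (2 * Module.finrank ℂ (groupCohomology.H1 (Rep.of ρ)) : ℤ)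
      = Module.finrank ℂ V
        + Module.finrank ℂ (LinearMap.ker (ρ (r (1 : ZMod 0)) - LinearMap.id))
        - Module.finrank ℂ (LinearMap.ker (ρ (sr (0 : ZMod 0)) - LinearMap.id))
        - Module.finrank ℂ (LinearMap.ker (ρ (sr (1 : ZMod 0)) - LinearMap.id)) := by
  have hZ := finrank_Z ρ
  have hB := finrank_B ρ
  have hH := finrank_H1_add ρ
  have hinv : Module.finrank ℂ (Representation.invariants ρ)
      = Module.finrank ℂ (LinearMap.ker (ρ (sr (0 : ZMod 0)) - LinearMap.id)
          ⊓ LinearMap.ker (ρ (sr (1 : ZMod 0)) - LinearMap.id) : Submodule ℂ V) := by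
    rw [invariants_eq ρ]
  have h40 := finrank_invol (ρ (sr (0 : ZMod 0))) (S0S0 ρ)
  have h41 := finrank_invol (ρ (sr (1 : ZMod 0))) (S1S1 ρ)
  have h6 := finrank_ker_r1 ρ
  have h7 := Submodule.finrank_sup_add_finrank_inf_eq
    (LinearMap.ker (ρ (sr (0 : ZMod 0)) + LinearMap.id))
    (LinearMap.ker (ρ (sr (1 : ZMod 0)) + LinearMap.id))
  have hrefl : Φ.IsRefl := fun x y h => by rw [hΦsymm]; exact h
  have h8 : Module.finrank ℂ (LinearMap.ker (ρ (sr (0 : ZMod 0)) + LinearMap.id)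
        ⊔ LinearMap.ker (ρ (sr (1 : ZMod 0)) + LinearMap.id) : Submodule ℂ V)
      + Module.finrank ℂ (LinearMap.ker (ρ (sr (0 : ZMod 0)) - LinearMap.id)
        ⊓ LinearMap.ker (ρ (sr (1 : ZMod 0)) - LinearMap.id) : Submodule ℂ V)
      = Module.finrank ℂ V := by
    have h' := LinearMap.BilinForm.finrank_add_finrank_orthogonal (B := Φ) hrefl
      (LinearMap.ker (ρ (sr (0 : ZMod 0)) + LinearMap.id)
        ⊔ LinearMap.ker (ρ (sr (1 : ZMod 0)) + LinearMap.id))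
    rw [LinearMap.BilinForm.orthogonal_top_eq_bot (B := Φ) ⟨hΦnd, fun y hy => hΦnd y fun w => (hΦsymm y w).trans (hy w)⟩, inf_bot_eq, finrank_bot, add_zero, orth_sup,
      orth_ker Φ (ρ (sr (0 : ZMod 0))) (S0S0 ρ) hΦsymm hΦnd (hΦinv (sr 0)),
      orth_ker Φ (ρ (sr (1 : ZMod 0))) (S1S1 ρ) hΦsymm hΦnd (hΦinv (sr 1))] at h'
    exact h'
  omega
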